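/- Let T be a tree of height λ (λ regular uncountable) in Π_{α<λ}κ_α in which every strictly increasing sequence of nodes has at most one limit node, and let ⟨𝒜_ξ : ξ < ζ⟩ (ζ < λ) be subtrees of T. Suppose for some node t̄ ∈ T: for every t ⊒ t̄ in T and every ξ < ζ, the tree T↾t is not contained in 𝒜_ξ, but above every node there is a node lying in some 𝒜_ξ, and above every node there is, for each ξ, a node outside 𝒜_ξ. Then there is a strictly increasing sequence ⟨s_i : i < ζ⟩ of nodes of T such that each s_i lies in some 𝒜_{ξ(i)} with ξ(i) < ζ but s_i ∉ 𝒜_{ξ(j)} for all j < i; consequently, letting s = ⋃_i s_i, every node t ⊒ s in T↾s lies in no 𝒜_ξ for ξ < ζ. -/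

import Mathlib

/-- A node of a tree of sequences of ordinals: a length together with a value
function that is zero at and above the length. -/
structure PNode : Type 1 where
  len : Ordinal.{0}
  val : Ordinal.{0} → Ordinal.{0}
  zero_above : ∀ β, len ≤ β → val β = 0

namespace PNode

/-- The tree (extension) order on nodes. -/
def le (s t : PNode) : Prop := s.len ≤ t.len ∧ ∀ β < s.len, s.val β = t.val β

/-- Restriction of a node to length `α`. -/
noncomputable def restrict (t : PNode) (α : Ordinal) : PNode where
  len := min α t.len
  val := fun β => if β < min α t.len then t.val β else 0
  zero_above := by intro β h; simp [not_lt.mpr h]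

/-- Extension of a node by one more value `β`. -/
noncomputable def extend (t : PNode) (β : Ordinal) : PNode where
  len := t.len + 1
  val := fun γ => if γ < t.len then t.val γ else if γ = t.len then β else 0
  zero_above := by
    intro γ h
    have h1 : t.len < γ := by
      refine lt_of_lt_of_le ?_ h
      rw [Ordinal.add_one_eq_succ]; exact Order.lt_succ _
    simp [not_lt.mpr h1.le, h1.ne']

end PNode

/-- A tree: a nonempty set of nodes closed under restriction. -/
def IsTree (T : Set PNode) : Prop :=
  T.Nonempty ∧ ∀ t ∈ T, ∀ α, t.restrict α ∈ T

/-- The set of ordinals `β` such that `t⌢⟨β⟩` belongs to `T` (the ordinal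
successor set of `t`). -/
def OSucc (T : Set PNode) (t : PNode) : Set Ordinal := {β | t.extend β ∈ T}

/-- The node `t` lies in the product `Π_{β < len t} κ β`. -/
def InProd (κ : Ordinal.{0} → Cardinal.{0}) (t : PNode) : Prop :=
  ∀ β < t.len, t.val β < (κ β).ord

/-- The set of branches of `T` of length `α`: nodes of length `α` all of whose
proper restrictions lie in `T`. -/
def Br (T : Set PNode) (α : Ordinal) : Set PNode :=
  {b | b.len = α ∧ ∀ β < α, b.restrict β ∈ T}

/-- `T` is ever-branching (w.r.t. the cardinals `κ α`, `α < δ`). -/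
def EverBranching (κ : Ordinal.{0} → Cardinal.{0}) (T : Set PNode) (δ : Ordinal) : Prop :=
  ∀ α < δ, ∀ s ∈ T, ∃ t ∈ T, s.le t ∧ Cardinal.lift.{1,0} (κ α) ≤ Cardinal.mk (OSucc T t)

/-- `T` has no branch of length `< δ`: every branch of length `< δ` has a
proper extension in `T`. -/
def NoShortBranch (T : Set PNode) (δ : Ordinal) : Prop :=
  ∀ b : PNode, b.len < δ → (∀ β < b.len, b.restrict β ∈ T) →
    ∃ s ∈ T, b.le s ∧ b.len < s.len

/-- A perfect tree of height `δ`: a tree, `<δ`-closed (no short branches) and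
ever-branching. -/
def PerfectTree (κ : Ordinal.{0} → Cardinal.{0}) (T : Set PNode) (δ : Ordinal) : Prop :=
  IsTree T ∧ NoShortBranch T δ ∧ EverBranching κ T δ

namespace PNode

theorem le_refl' (s : PNode) : s.le s := ⟨le_rfl, fun _ _ => rfl⟩

theorem le_trans' {s t u : PNode} (h1 : s.le t) (h2 : t.le u) : s.le u :=
  ⟨h1.1.trans h2.1, fun β hβ => (h1.2 β hβ).trans (h2.2 β (hβ.trans_le h1.1))⟩

theorem ext' {s t : PNode} (hl : s.len = t.len) (hv : ∀ β, s.val β = t.val β) : s = t := by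
  cases s with
  | mk l1 v1 z1 =>
    cases t with
    | mk l2 v2 z2 =>
      simp only at hl hv
      subst hl
      have : v1 = v2 := funext hv
      subst this
      rfl

theorem eq_of_le_le {s t : PNode} (h1 : s.le t) (h2 : t.le s) : s = t := by
  have hl : s.len = t.len := le_antisymm h1.1 h2.1
  refine ext' hl fun β => ?_
  by_cases hβ : β < s.len
  · exact h1.2 β hβ
  · rw [s.zero_above β (not_lt.mp hβ), t.zero_above β (hl ▸ not_lt.mp hβ)]

theorem len_lt_of_le_ne {s t : PNode} (h : s.le t) (hne : s ≠ t) : s.len < t.len := by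
  rcases lt_or_eq_of_le h.1 with h' | h'
  · exact h'
  · exact absurd (eq_of_le_le h ⟨h'.ge, fun β hβ => (h.2 β (h' ▸ hβ)).symm⟩) hne

theorem restrict_eq_of_le {s t : PNode} (h : s.le t) : t.restrict s.len = s := by
  refine ext' (min_eq_left h.1) fun β => ?_
  show (if β < min s.len t.len then t.val β else 0) = s.val β
  rw [min_eq_left h.1]
  by_cases hβ : β < s.len
  · rw [if_pos hβ, ← h.2 β hβ]
  · rw [if_neg hβ, s.zero_above β (not_lt.mp hβ)]

theorem restrict_congr {s t : PNode} (h : s.le t) {α : Ordinal} (hα : α ≤ s.len) :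
    t.restrict α = s.restrict α := by
  refine ext' ?_ fun β => ?_
  · show min α t.len = min α s.len
    rw [min_eq_left (hα.trans h.1), min_eq_left hα]
  · show (if β < min α t.len then t.val β else 0) = if β < min α s.len then s.val β else 0
    rw [min_eq_left (hα.trans h.1), min_eq_left hα]
    by_cases hβ : β < α
    · rw [if_pos hβ, if_pos hβ, h.2 β (lt_of_lt_of_le hβ hα)]
    · rw [if_neg hβ, if_neg hβ]

end PNode

instance : Nonempty PNode := ⟨⟨0, fun _ => 0, fun _ _ => rfl⟩⟩

/-- The union node of a bounded family of nodes. -/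
noncomputable def unionNode (i : Ordinal) (s : Ordinal → PNode) : PNode where
  len := Ordinal.bsup i fun j _ => (s j).len
  val := fun β => Ordinal.bsup i fun j _ => if β < (s j).len then (s j).val β else 0
  zero_above := by
    intro β h
    apply le_antisymm _ zero_le
    apply Ordinal.bsup_le
    intro j hj
    have hle : (s j).len ≤ β := le_trans (Ordinal.le_bsup _ j hj) h
    rw [if_neg (not_lt.mpr hle)]

theorem le_unionNode {i : Ordinal} {s : Ordinal → PNode}
    (hchain : ∀ j k, j < i → k < i → j ≤ k → (s j).le (s k)) {j : Ordinal} (hj : j < i) :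
    (s j).le (unionNode i s) := by
  constructor
  · exact Ordinal.le_bsup _ j hj
  · intro β hβ
    apply le_antisymm
    · have := Ordinal.le_bsup (fun k (_ : k < i) => if β < (s k).len then (s k).val β else 0) j hj
      rwa [if_pos hβ] at this
    · apply Ordinal.bsup_le
      intro k hk
      rcases le_total j k with hjk | hkj
      · rw [if_pos (lt_of_lt_of_le hβ (hchain j k hj hk hjk).1), ← (hchain j k hj hk hjk).2 β hβ]
      · by_cases hβk : β < (s k).len
        · rw [if_pos hβk, (hchain k j hk hj hkj).2 β hβk]
        · rw [if_neg hβk]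
          exact zero_le

theorem unionNode_restrict_mem {T : Set PNode} (hT : IsTree T) {i : Ordinal} {s : Ordinal → PNode}
    (hmem : ∀ j < i, s j ∈ T) (hchain : ∀ j k, j < i → k < i → j ≤ k → (s j).le (s k)) :
    ∀ β < (unionNode i s).len, (unionNode i s).restrict β ∈ T := by
  intro β hβ
  obtain ⟨j, hj, hβj⟩ := (Ordinal.lt_bsup _).mp hβ
  rw [PNode.restrict_congr (le_unionNode hchain hj) hβj.le]
  exact hT.2 (s j) (hmem j hj) β

/-- Candidate set: the `ξ < ζ` such that some proper extension of `t` lies in `𝒜 ξ`. -/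
def Cand (T : Set PNode) (𝒜 : Ordinal → Set PNode) (ζ : Ordinal) (t : PNode) : Set Ordinal :=
  {ξ | ξ < ζ ∧ ∃ u ∈ T, t.le u ∧ t ≠ u ∧ u ∈ 𝒜 ξ}

/-- The base node at stage `i`. -/
noncomputable def pick1 (T : Set PNode) (𝒜 : Ordinal → Set PNode) (tbar : PNode) (i : Ordinal)
    (prev : ∀ j, j < i → PNode × PNode × Ordinal) : PNode :=
  Classical.epsilon fun t : PNode => t ∈ T ∧ tbar.le t ∧
    ∀ j, ∀ hj : j < i, ((prev j hj).2.1).le t ∧ t ∉ 𝒜 ((prev j hj).2.2)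

/-- One step of the construction. -/
noncomputable def escBody (T : Set PNode) (𝒜 : Ordinal → Set PNode) (ζ : Ordinal) (tbar : PNode)
    (i : Ordinal) (prev : ∀ j, j < i → PNode × PNode × Ordinal) : PNode × PNode × Ordinal :=
  (pick1 T 𝒜 tbar i prev,
   Classical.epsilon fun u : PNode => u ∈ T ∧ (pick1 T 𝒜 tbar i prev).le u ∧
     pick1 T 𝒜 tbar i prev ≠ u ∧ u ∈ 𝒜 (sInf (Cand T 𝒜 ζ (pick1 T 𝒜 tbar i prev))),
   sInf (Cand T 𝒜 ζ (pick1 T 𝒜 tbar i prev)))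

/-- The recursive construction. -/
noncomputable def esc (T : Set PNode) (𝒜 : Ordinal → Set PNode) (ζ : Ordinal) (tbar : PNode) :
    Ordinal → PNode × PNode × Ordinal :=
  WellFounded.fix wellFounded_lt (escBody T 𝒜 ζ tbar)

theorem esc_eq (T : Set PNode) (𝒜 : Ordinal → Set PNode) (ζ : Ordinal) (tbar : PNode)
    (i : Ordinal) :
    esc T 𝒜 ζ tbar i = escBody T 𝒜 ζ tbar i (fun j _ => esc T 𝒜 ζ tbar j) :=
  WellFounded.fix_eq _ _ _

/-- **Escaping a short family of subtrees.** Let `T` be a tree of height `λ` (regular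
uncountable) in `Π_{α<λ} κ α` with no short branches, and `⟨𝒜 ξ : ξ < ζ⟩` (`ζ < λ`)
subtrees of `T`. Suppose for some `t̄ ∈ T`: for every `t ⊒ t̄` in `T` and every
`ξ < ζ`, `T↾t` is not contained in `𝒜 ξ`; above every `t ⊒ t̄` there is a proper
extension lying in some `𝒜 ξ`; and above every `t ⊒ t̄`, for each `ξ`, there is a
proper extension outside `𝒜 ξ`. Then there is a strictly `⊑`-increasing sequence
`⟨s i : i < ζ⟩` in `T` with each `s i` in some `𝒜 (ξf i)` but outside `𝒜 (ξf j)`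
for all `j < i`; consequently its union `s̄ ∈ T` satisfies that no `t ⊒ s̄` in `T`
lies in any `𝒜 ξ`, `ξ < ζ`. -/
theorem escape_subtrees
    (lam : Cardinal.{0}) (hlamreg : lam.IsRegular) (hunc : Cardinal.aleph0 < lam)
    (κ : Ordinal.{0} → Cardinal.{0})
    (T : Set PNode) (hT : IsTree T)
    (hTsub : ∀ t ∈ T, t.len < lam.ord ∧ InProd κ t)
    (hclosed : NoShortBranch T lam.ord)
    (ζ : Ordinal.{0}) (hζ : ζ < lam.ord) (hζ0 : ζ ≠ 0)
    (𝒜 : Ordinal → Set PNode)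
    (hsub : ∀ ξ < ζ, 𝒜 ξ ⊆ T ∧ ∀ t ∈ 𝒜 ξ, ∀ α, t.restrict α ∈ 𝒜 ξ)
    (tbar : PNode) (htbar : tbar ∈ T)
    (hnotcontained : ∀ t ∈ T, tbar.le t → ∀ ξ < ζ, ∃ s ∈ T, t.le s ∧ s ∉ 𝒜 ξ)
    (hinto : ∀ t ∈ T, tbar.le t → ∃ ξ < ζ, ∃ s ∈ T, t.le s ∧ t ≠ s ∧ s ∈ 𝒜 ξ)
    (havoid : ∀ t ∈ T, tbar.le t → ∀ ξ < ζ, ∃ s ∈ T, t.le s ∧ t ≠ s ∧ s ∉ 𝒜 ξ) :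
    ∃ (s : Ordinal → PNode) (ξf : Ordinal → Ordinal),
      (∀ i < ζ, s i ∈ T ∧ tbar.le (s i)) ∧
      (∀ i j : Ordinal, i < j → j < ζ → (s i).le (s j) ∧ s i ≠ s j) ∧
      (∀ i < ζ, ξf i < ζ ∧ s i ∈ 𝒜 (ξf i) ∧ ∀ j < i, s i ∉ 𝒜 (ξf j)) ∧
      ∃ sbar ∈ T, (∀ i < ζ, (s i).le sbar) ∧
        ∀ t ∈ T, sbar.le t → ∀ ξ < ζ, t ∉ 𝒜 ξ := by

  classical
  set F := esc T 𝒜 ζ tbar with hFdef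
  -- downward / upward closure of the subtrees
  have down : ∀ ξ, ξ < ζ → ∀ a b : PNode, a.le b → b ∈ 𝒜 ξ → a ∈ 𝒜 ξ := by
    intro ξ hξ a b hab hb
    have := (hsub ξ hξ).2 b hb a.len
    rwa [PNode.restrict_eq_of_le hab] at this
  have up : ∀ ξ, ξ < ζ → ∀ a b : PNode, a.le b → a ∉ 𝒜 ξ → b ∉ 𝒜 ξ :=
    fun ξ hξ a b hab ha hb => ha (down ξ hξ a b hab hb)
  -- the invariant
  have main : ∀ i, i ≤ ζ →
      (F i).1 ∈ T ∧ tbar.le (F i).1 ∧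
      (∀ j, j < i → ((F j).2.1).le (F i).1 ∧ (F i).1 ∉ 𝒜 ((F j).2.2) ∧ (F j).2.2 < (F i).2.2) ∧
      (F i).2.2 ∈ Cand T 𝒜 ζ (F i).1 ∧ (∀ ξ ∈ Cand T 𝒜 ζ (F i).1, (F i).2.2 ≤ ξ) ∧
      (F i).2.1 ∈ T ∧ ((F i).1).le ((F i).2.1) ∧ (F i).1 ≠ (F i).2.1 ∧ (F i).2.1 ∈ 𝒜 ((F i).2.2) := by
    intro i
    induction i using Ordinal.induction with
    | h i IH =>
    intro hiζ
    -- basic consequences of the IH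
    have IHmem : ∀ j, j < i → (F j).2.1 ∈ T := fun j hj => ((IH j hj (le_of_lt (lt_of_lt_of_le hj hiζ))).2.2.2.2.2.1)
    have IHts : ∀ j, j < i → ((F j).1).le ((F j).2.1) ∧ (F j).1 ≠ (F j).2.1 :=
      fun j hj => ⟨(IH j hj (le_of_lt (lt_of_lt_of_le hj hiζ))).2.2.2.2.2.2.1,
        (IH j hj (le_of_lt (lt_of_lt_of_le hj hiζ))).2.2.2.2.2.2.2.1⟩
    have IHξ : ∀ j, j < i → (F j).2.2 < ζ := fun j hj =>
      ((IH j hj (le_of_lt (lt_of_lt_of_le hj hiζ))).2.2.2.1).1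
    have IHsA : ∀ j, j < i → (F j).2.1 ∈ 𝒜 ((F j).2.2) := fun j hj =>
      (IH j hj (le_of_lt (lt_of_lt_of_le hj hiζ))).2.2.2.2.2.2.2.2
    have IHtbar : ∀ j, j < i → tbar.le ((F j).2.1) := fun j hj =>
      PNode.le_trans' (IH j hj (le_of_lt (lt_of_lt_of_le hj hiζ))).2.1 (IHts j hj).1
    have hchain : ∀ j k, j < i → k < i → j ≤ k → ((F j).2.1).le ((F k).2.1) := by
      intro j k hj hk hjk
      rcases lt_or_eq_of_le hjk with h | h
      · exact PNode.le_trans' ((IH k hk (le_of_lt (lt_of_lt_of_le hk hiζ))).2.2.1 j h).1 (IHts k hk).1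
      · subst h; exact PNode.le_refl' _
    -- existence of the basis node at stage i
    have hex : ∃ t : PNode, t ∈ T ∧ tbar.le t ∧
        ∀ j, ∀ _ : j < i, ((F j).2.1).le t ∧ t ∉ 𝒜 ((F j).2.2) := by
      rcases Ordinal.zero_or_succ_or_isSuccLimit i with h0 | ⟨j, hj⟩ | hlim
      · subst h0
        exact ⟨tbar, htbar, PNode.le_refl' _, fun j hj => absurd hj (not_lt_of_ge (zero_le : (0 : Ordinal) ≤ j))⟩
      · subst hj
        have hj' : j < Order.succ j := Order.lt_succ j
        obtain ⟨u, hu, hsu, hne, hout⟩ :=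
          havoid ((F j).2.1) (IHmem j hj') (IHtbar j hj') ((F j).2.2) (IHξ j hj')
        refine ⟨u, hu, PNode.le_trans' (IHtbar j hj') hsu, ?_⟩
        intro k hk
        have hkj : k ≤ j := Order.lt_succ_iff.mp hk
        rcases lt_or_eq_of_le hkj with h | h
        · refine ⟨PNode.le_trans' (hchain k j hk hj' hkj) hsu, ?_⟩
          have hsjout : (F j).2.1 ∉ 𝒜 ((F k).2.2) :=
            up ((F k).2.2) (IHξ k hk) ((F j).1) ((F j).2.1) (IHts j hj').1
              (((IH j hj' (le_of_lt (lt_of_lt_of_le hj' hiζ))).2.2.1 k h).2.1)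
          exact up ((F k).2.2) (IHξ k hk) ((F j).2.1) u hsu hsjout
        · subst h
          exact ⟨hsu, hout⟩
      · -- limit case
        set b := unionNode i (fun j => (F j).2.1) with hb
        have hblen : b.len < lam.ord := by
          apply Ordinal.bsup_lt_ord
          · rw [hlamreg.cof_eq]
            exact Cardinal.lt_ord.mp (lt_of_le_of_lt hiζ hζ)
          · intro j hj
            exact (hTsub _ (IHmem j hj)).1
        obtain ⟨u, hu, hbu, _⟩ := hclosed b hblen (unionNode_restrict_mem hT IHmem hchain)
        have h0i : (0 : Ordinal) < i := hlim.pos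
        refine ⟨u, hu, PNode.le_trans' (IHtbar 0 h0i) (PNode.le_trans' (le_unionNode hchain h0i) hbu), ?_⟩
        intro j hj
        have hsj : (Order.succ j) < i := hlim.succ_lt hj
        refine ⟨PNode.le_trans' (le_unionNode hchain hj) hbu, ?_⟩
        have htj1 : (F (Order.succ j)).1 ∉ 𝒜 ((F j).2.2) :=
          ((IH (Order.succ j) hsj (le_of_lt (lt_of_lt_of_le hsj hiζ))).2.2.1 j (Order.lt_succ j)).2.1
        have : ((F (Order.succ j)).1).le u :=
          PNode.le_trans' (IHts _ hsj).1 (PNode.le_trans' (le_unionNode hchain hsj) hbu)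
        exact up ((F j).2.2) (IHξ j hj) _ u this htj1
    -- identify the components of F i
    have hFi1 : (F i).1 = Classical.epsilon fun t : PNode => t ∈ T ∧ tbar.le t ∧
        ∀ j, ∀ hj : j < i, ((F j).2.1).le t ∧ t ∉ 𝒜 ((F j).2.2) := by
      rw [hFdef, esc_eq]; rfl
    have ht : (F i).1 ∈ T ∧ tbar.le (F i).1 ∧
        ∀ j, ∀ _ : j < i, ((F j).2.1).le ((F i).1) ∧ (F i).1 ∉ 𝒜 ((F j).2.2) := by
      rw [hFi1]; exact Classical.epsilon_spec hex
    have hFi3 : (F i).2.2 = sInf (Cand T 𝒜 ζ ((F i).1)) := by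
      rw [hFdef, esc_eq]; rfl
    have hcand : (Cand T 𝒜 ζ ((F i).1)).Nonempty := by
      obtain ⟨ξ, hξ, u, hu, h1, h2, h3⟩ := hinto ((F i).1) ht.1 ht.2.1
      exact ⟨ξ, hξ, u, hu, h1, h2, h3⟩
    have hmemC : (F i).2.2 ∈ Cand T 𝒜 ζ ((F i).1) := by
      rw [hFi3]; exact csInf_mem hcand
    have hlb : ∀ ξ ∈ Cand T 𝒜 ζ ((F i).1), (F i).2.2 ≤ ξ := by
      intro ξ hξ; rw [hFi3]; exact csInf_le' hξ
    have hex2 : ∃ u : PNode, u ∈ T ∧ ((F i).1).le u ∧ (F i).1 ≠ u ∧ u ∈ 𝒜 ((F i).2.2) := by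
      obtain ⟨_, u, hu, h1, h2, h3⟩ := hmemC
      exact ⟨u, hu, h1, h2, h3⟩
    have hFi2 : (F i).2.1 = Classical.epsilon fun u : PNode => u ∈ T ∧ ((F i).1).le u ∧
        (F i).1 ≠ u ∧ u ∈ 𝒜 ((F i).2.2) := by
      rw [hFdef, esc_eq]; rfl
    have hs : (F i).2.1 ∈ T ∧ ((F i).1).le ((F i).2.1) ∧ (F i).1 ≠ (F i).2.1 ∧
        (F i).2.1 ∈ 𝒜 ((F i).2.2) := by
      rw [hFi2]; exact Classical.epsilon_spec hex2
    refine ⟨ht.1, ht.2.1, ?_, hmemC, hlb, hs⟩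
    intro j hj
    refine ⟨(ht.2.2 j hj).1, (ht.2.2 j hj).2, ?_⟩
    -- strict monotonicity of the ξ's
    have hIHj := IH j hj (le_of_lt (lt_of_lt_of_le hj hiζ))
    have hne : (F j).2.2 ≠ (F i).2.2 := by
      intro h
      obtain ⟨hξζ, u, hu, h1, h2, h3⟩ := hmemC
      rw [← h] at h3
      exact up ((F j).2.2) (IHξ j hj) ((F i).1) u h1 (ht.2.2 j hj).2 h3
    have hle : (F j).2.2 ≤ (F i).2.2 := by
      apply hIHj.2.2.2.2.1
      obtain ⟨hξζ, u, hu, h1, h2, h3⟩ := hmemC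
      have hjlt : ((F j).1).len < u.len :=
        lt_of_lt_of_le (PNode.len_lt_of_le_ne (IHts j hj).1 (IHts j hj).2)
          (le_trans ((ht.2.2 j hj).1).1 h1.1)
      refine ⟨hξζ, u, hu, PNode.le_trans' (IHts j hj).1 (PNode.le_trans' (ht.2.2 j hj).1 h1), ?_, h3⟩
      intro h; rw [h] at hjlt; exact lt_irrefl _ hjlt
    exact lt_of_le_of_ne hle hne
  -- assemble the conclusion
  refine ⟨fun i => (F i).2.1, fun i => (F i).2.2, ?_, ?_, ?_, ?_⟩
  · intro i hi
    have h := main i (le_of_lt hi)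
    exact ⟨h.2.2.2.2.2.1, PNode.le_trans' h.2.1 h.2.2.2.2.2.2.1⟩
  · intro i j hij hj
    have hj' := main j (le_of_lt hj)
    have hi' := main i (le_of_lt (lt_trans hij hj))
    have hle : ((F i).2.1).le ((F j).2.1) :=
      PNode.le_trans' (hj'.2.2.1 i hij).1 hj'.2.2.2.2.2.2.1
    refine ⟨hle, ?_⟩
    intro h
    have h' : (F i).2.1 = (F j).2.1 := h
    have hjout : (F j).2.1 ∉ 𝒜 ((F i).2.2) :=
      up ((F i).2.2) hi'.2.2.2.1.1 ((F j).1) ((F j).2.1) hj'.2.2.2.2.2.2.1 (hj'.2.2.1 i hij).2.1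
    have hmem := hi'.2.2.2.2.2.2.2.2
    rw [h'] at hmem
    exact hjout hmem
  · intro i hi
    have h := main i (le_of_lt hi)
    refine ⟨h.2.2.2.1.1, h.2.2.2.2.2.2.2.2, ?_⟩
    intro j hj
    have hji : j < ζ := lt_trans hj hi
    exact up ((F j).2.2) (main j (le_of_lt hji)).2.2.2.1.1 ((F i).1) ((F i).2.1)
      h.2.2.2.2.2.2.1 (h.2.2.1 j hj).2.1
  · have hζζ := main ζ le_rfl
    refine ⟨(F ζ).1, hζζ.1, ?_, ?_⟩
    · intro i hi
      exact (hζζ.2.2.1 i hi).1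
    · intro t ht hle ξ hξ htA
      have hsbarA : (F ζ).1 ∈ 𝒜 ξ := down ξ hξ ((F ζ).1) t hle htA
      -- ξ is not any of the chosen indices
      have hA : ∀ j, j < ζ → ξ ≠ (F j).2.2 := by
        intro j hj h
        rw [h] at hsbarA
        exact (hζζ.2.2.1 j hj).2.1 hsbarA
      -- yet ξf ξ = ξ
      have hmono : ∀ j i, j < i → i ≤ ζ → (F j).2.2 < (F i).2.2 :=
        fun j i hji hi => ((main i hi).2.2.1 j hji).2.2
      have hidle : ∀ i, i < ζ → i ≤ (F i).2.2 := by
        intro i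
        induction i using Ordinal.induction with
        | h i IH =>
        intro hi
        by_contra h
        push_neg at h
        have h1 := IH ((F i).2.2) h (lt_trans h hi)
        have h2 := hmono ((F i).2.2) i h (le_of_lt hi)
        exact absurd (lt_of_le_of_lt h1 h2) (lt_irrefl _)
      have hξmain := main ξ (le_of_lt hξ)
      have hup : (F ξ).2.2 ≤ ξ := by
        apply hξmain.2.2.2.2.1
        have h1 : ((F ξ).2.1).le ((F ζ).1) := (hζζ.2.2.1 ξ hξ).1
        have h2 : ((F ξ).1).le t :=
          PNode.le_trans' hξmain.2.2.2.2.2.2.1 (PNode.le_trans' h1 hle)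
        have hlen : ((F ξ).1).len < t.len :=
          lt_of_lt_of_le
            (PNode.len_lt_of_le_ne hξmain.2.2.2.2.2.2.1 hξmain.2.2.2.2.2.2.2.1)
            (le_trans h1.1 hle.1)
        refine ⟨hξ, t, ht, h2, ?_, htA⟩
        intro h; rw [h] at hlen; exact lt_irrefl _ hlen
      exact hA ξ hξ (le_antisymm (hidle ξ hξ) hup)
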